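/- For any positive integer j and any graph G, the j-independence number α_j(G) is at most the upper j-annihilation number a_j(G). -/

import Mathlib

open Finset

namespace DSI

variable {V : Type*} (G : SimpleGraph V) [Fintype V] [DecidableEq V] [DecidableRel G.Adj]

/-- The degree sequence of `G`, sorted in non-decreasing order. -/
def dseq : List ℕ := (Finset.univ.val.map (fun v => G.degree v)).sort (· ≤ ·)

/-- The sum of the `k` smallest degrees, `Σ_{i=1}^k d_i`. -/
def sumSmallest (k : ℕ) : ℕ := ((dseq G).take k).sum

/-- The sum of the `k` largest degrees, `Σ_{i=1}^k d_{n-i+1}`. -/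
def sumLargest (k : ℕ) : ℕ := ((dseq G).reverse.take k).sum

/-- The number of edges `m(G)`. -/
def esize : ℕ := G.edgeFinset.card

/-- `m[S]`: the number of edges of the subgraph induced by `S`. -/
def mOn (S : Finset V) : ℕ := (S.sym2.filter (fun e => e ∈ G.edgeSet)).card

/-- A set `I` is `j`-independent if every vertex of `I` has fewer than `j` neighbours in `I`,
i.e. the induced subgraph has maximum degree `< j`. -/
def JIndep (j : ℕ) (I : Finset V) : Prop := ∀ v ∈ I, (I.filter (G.Adj v)).card < j

/-- The `j`-independence number `α_j(G)`. -/
noncomputable def alphaJ (j : ℕ) : ℕ := sSup {k | ∃ I : Finset V, JIndep G j I ∧ I.card = k}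

/-- The family `F` of maximum `j`-independent sets. -/
noncomputable def maxJIndep (j : ℕ) : Set (Finset V) :=
  {S | JIndep G j S ∧ S.card = alphaJ G j}

/-- `max_{S ∈ F} (m[V−S] − m[S])`. -/
noncomputable def fU (j : ℕ) : ℤ :=
  sSup ((fun S : Finset V => (mOn G Sᶜ : ℤ) - (mOn G S : ℤ)) '' maxJIndep G j)

/-- `min_{S ∈ F} (m[V−S] − m[S])`. -/
noncomputable def fL (j : ℕ) : ℤ :=
  sInf ((fun S : Finset V => (mOn G Sᶜ : ℤ) - (mOn G S : ℤ)) '' maxJIndep G j)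

/-- The upper `j`-annihilation number `a_j(G)`. -/
noncomputable def aJ (j : ℕ) : ℕ :=
  sSup {k | k ≤ Fintype.card V ∧ (sumSmallest G k : ℤ) + fU G j ≤ (esize G : ℤ)}

/-- The lower `j`-annihilation number `c_j(G)`. -/
noncomputable def cJ (j : ℕ) : ℕ :=
  sInf {k | k ≤ Fintype.card V ∧ (esize G : ℤ) ≤ (sumLargest G k : ℤ) + fL G j}

/-- The annihilation number `a(G)`. -/
noncomputable def annihilation : ℕ :=
  sSup {k | k ≤ Fintype.card V ∧ sumSmallest G k ≤ esize G}

/-- An independent set. -/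
def IndepSet (I : Finset V) : Prop := ∀ v ∈ I, ∀ w ∈ I, ¬ G.Adj v w

/-- The independence number `α(G)`. -/
noncomputable def alpha : ℕ := sSup {k | ∃ I : Finset V, IndepSet G I ∧ I.card = k}

end DSI
section AuxLemmas

open Finset

private lemma dsi_take_sum_le : ∀ (l : List ℕ), l.Pairwise (· ≤ ·) →
    ∀ (t : Multiset ℕ), t ≤ ↑l → (l.take (Multiset.card t)).sum ≤ t.sum := by
  intro l
  induction l with
  | nil =>
    intro _ t ht
    have : t = 0 := Multiset.le_zero.mp ht
    simp [this]
  | cons a l ih =>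
    intro hs t ht
    rcases Multiset.empty_or_exists_mem t with h0 | ⟨b, hb⟩
    · simp [h0]
    by_cases ha : a ∈ t
    · have h1 : t.erase a ≤ ↑l := by
        have := Multiset.erase_le_erase a ht
        simpa using this
      have h2 : Multiset.card t = Multiset.card (t.erase a) + 1 :=
        (Multiset.card_erase_add_one ha).symm
      have h3 := ih hs.of_cons (t.erase a) h1
      calc ((a :: l).take (Multiset.card t)).sum
          = a + ((l.take (Multiset.card (t.erase a))).sum) := by
            rw [h2]; simp
        _ ≤ a + (t.erase a).sum := by omega
        _ = t.sum := by rw [← Multiset.sum_cons, Multiset.cons_erase ha]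
    · have h1 : t ≤ ↑l := by
        rw [Multiset.le_iff_count]
        intro x
        by_cases hx : x = a
        · simp [hx, Multiset.count_eq_zero_of_notMem ha]
        · have := (Multiset.le_iff_count.mp ht) x
          simpa [Multiset.count_cons, List.count_cons, hx, Ne.symm hx] using this
      have hbl : b ∈ (↑l : Multiset ℕ) := Multiset.mem_of_le h1 hb
      have hab : a ≤ b := (List.pairwise_cons.mp hs).1 b (by simpa using hbl)
      have h2 : t.erase b ≤ ↑l := le_trans (Multiset.erase_le b t) h1
      have h3 := ih hs.of_cons (t.erase b) h2
      have h4 : Multiset.card t = Multiset.card (t.erase b) + 1 :=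
        (Multiset.card_erase_add_one hb).symm
      calc ((a :: l).take (Multiset.card t)).sum
          = a + ((l.take (Multiset.card (t.erase b))).sum) := by
            rw [h4]; simp
        _ ≤ b + (t.erase b).sum := Nat.add_le_add hab h3
        _ = t.sum := by rw [← Multiset.sum_cons, Multiset.cons_erase hb]

variable {V : Type*} (G : SimpleGraph V) [Fintype V] [DecidableEq V] [DecidableRel G.Adj]

private lemma dsi_sum_deg_filter (S : Finset V) :
    ∑ v ∈ S, G.degree v = ∑ e ∈ G.edgeFinset, (S.filter (fun v => v ∈ e)).card := by
  have h : ∀ v, G.degree v = (G.edgeFinset.filter (fun e => v ∈ e)).card := fun v => by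
    rw [← SimpleGraph.card_incidenceFinset_eq_degree, SimpleGraph.incidenceFinset_eq_filter]
  simp_rw [h, Finset.card_filter]
  rw [Finset.sum_comm]

private lemma dsi_mOn_eq' (S : Finset V) :
    DSI.mOn G S = (G.edgeFinset.filter (fun e => e ∈ S.sym2)).card := by
  unfold DSI.mOn
  congr 1
  ext e
  simp only [Finset.mem_filter, SimpleGraph.mem_edgeFinset, SimpleGraph.mem_edgeSet,
    and_comm]

private lemma dsi_key_identity_nat (S : Finset V) :
    (∑ v ∈ S, G.degree v) + DSI.mOn G Sᶜ = DSI.esize G + DSI.mOn G S := by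
  rw [dsi_mOn_eq', dsi_mOn_eq', dsi_sum_deg_filter, DSI.esize]
  rw [Finset.card_filter, Finset.card_filter, Finset.card_eq_sum_ones G.edgeFinset]
  rw [← Finset.sum_add_distrib, ← Finset.sum_add_distrib]
  apply Finset.sum_congr rfl
  intro e he
  induction e using Sym2.ind with
  | _ a b =>
    have hadj : G.Adj a b := by simpa using he
    have hne : a ≠ b := hadj.ne
    have hfil : S.filter (fun v => v ∈ s(a, b)) = S.filter (fun v => v = a ∨ v = b) := by
      apply Finset.filter_congr; intro v _; simp [Sym2.mem_iff]
    have hcard : #(({a} : Finset V) ∪ {b}) = 2 := by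
      rw [Finset.card_union_of_disjoint (by simp [hne.symm, hne])]; simp
    rw [hfil, Finset.filter_or, Finset.filter_eq', Finset.filter_eq']
    by_cases ha : a ∈ S <;> by_cases hb : b ∈ S <;>
      simp [ha, hb, Finset.mk_mem_sym2_iff, hne, hcard]

private lemma dsi_key_identity (S : Finset V) :
    (∑ v ∈ S, G.degree v : ℤ) + (DSI.mOn G Sᶜ : ℤ) - (DSI.mOn G S : ℤ) = (DSI.esize G : ℤ) := by
  have h := dsi_key_identity_nat G S
  have h2 : ((∑ v ∈ S, G.degree v) + DSI.mOn G Sᶜ : ℤ) = ((DSI.esize G + DSI.mOn G S : ℕ) : ℤ) := by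
    exact_mod_cast congrArg (Nat.cast : ℕ → ℤ) h
  push_cast at h2
  linarith

private lemma dsi_sumSmallest_le (S : Finset V) :
    DSI.sumSmallest G S.card ≤ ∑ v ∈ S, G.degree v := by
  have hsorted : (DSI.dseq G).Pairwise (· ≤ ·) := Multiset.pairwise_sort _ _
  have ht : (S.val.map (fun v => G.degree v)) ≤ (↑(DSI.dseq G) : Multiset ℕ) := by
    rw [DSI.dseq, Multiset.sort_eq]
    exact Multiset.map_le_map (Finset.val_le_iff.mpr (Finset.subset_univ S))
  have h2 : (S.val.map (fun v => G.degree v)).sum = ∑ v ∈ S, G.degree v := rfl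
  have h3 : Multiset.card (S.val.map (fun v => G.degree v)) = S.card := by simp
  have h4 := dsi_take_sum_le (DSI.dseq G) hsorted _ ht
  rw [DSI.sumSmallest, ← h3, ← h2]
  exact h4

end AuxLemmas

theorem alphaJ_le_aJ {V : Type*} (G : SimpleGraph V) [Fintype V]
    [DecidableEq V] [DecidableRel G.Adj] (j : ℕ) (hj : 1 ≤ j) :
    DSI.alphaJ G j ≤ DSI.aJ G j := by
  classical
  set α := DSI.alphaJ G j with hα
  -- the sup defining alphaJ is attained
  have hA0 : (0 : ℕ) ∈ {k | ∃ I : Finset V, DSI.JIndep G j I ∧ I.card = k} :=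
    ⟨∅, fun v hv => absurd hv (Finset.notMem_empty v), Finset.card_empty⟩
  have hAbdd : ∀ k ∈ {k | ∃ I : Finset V, DSI.JIndep G j I ∧ I.card = k}, k ≤ Fintype.card V := by
    rintro k ⟨I, _, rfl⟩
    exact Finset.card_le_univ I
  have hmem : α ∈ {k | ∃ I : Finset V, DSI.JIndep G j I ∧ I.card = k} :=
    Nat.sSup_mem ⟨0, hA0⟩ ⟨Fintype.card V, hAbdd⟩
  obtain ⟨I, hI, hIcard⟩ := hmem
  have hImax : I ∈ DSI.maxJIndep G j := ⟨hI, hIcard⟩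
  have hne : ((fun S : Finset V => (DSI.mOn G Sᶜ : ℤ) - (DSI.mOn G S : ℤ)) '' DSI.maxJIndep G j).Nonempty :=
    Set.Nonempty.image _ ⟨I, hImax⟩
  -- the key inequality
  have hkey : (DSI.sumSmallest G α : ℤ) + DSI.fU G j ≤ (DSI.esize G : ℤ) := by
    have hle : DSI.fU G j ≤ (DSI.esize G : ℤ) - (DSI.sumSmallest G α : ℤ) := by
      apply csSup_le hne
      rintro x ⟨S, hS, rfl⟩
      dsimp only
      have hcard : S.card = α := hS.2
      have h1 : DSI.sumSmallest G α ≤ ∑ v ∈ S, G.degree v := by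
        rw [← hcard]; exact dsi_sumSmallest_le G S
      have h2 := dsi_key_identity G S
      have h1' : (DSI.sumSmallest G α : ℤ) ≤ (∑ v ∈ S, G.degree v : ℤ) := by
        exact_mod_cast h1
      linarith
    linarith
  -- α belongs to the set defining aJ
  have hαmem : α ∈ {k | k ≤ Fintype.card V ∧ (DSI.sumSmallest G k : ℤ) + DSI.fU G j ≤ (DSI.esize G : ℤ)} := by
    refine ⟨?_, hkey⟩
    rw [← hIcard]
    exact Finset.card_le_univ I
  have hbdd : BddAbove {k | k ≤ Fintype.card V ∧ (DSI.sumSmallest G k : ℤ) + DSI.fU G j ≤ (DSI.esize G : ℤ)} :=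
    ⟨Fintype.card V, fun k hk => hk.1⟩
  exact le_csSup hbdd hαmem
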